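/- If two real algebraic plane curves Γ and Z in ℝ² (zero sets of nonzero polynomials) have finite intersection, then the number of intersection points is at most deg(Γ)·deg(Z). -/

import Mathlib

open MvPolynomial Module

namespace BezoutAux

noncomputable section

variable {σ : Type*} {R : Type*}

lemma hc_totalDegree_ne_zero [CommSemiring R] (p : MvPolynomial σ R) (hp : p ≠ 0) :
    homogeneousComponent p.totalDegree p ≠ 0 := by
  classical
  obtain ⟨d, hd, hdeg⟩ : ∃ d ∈ p.support, (d.sum fun _ e => e) = p.totalDegree := by
    have hne : p.support.Nonempty := by
      rwa [Finset.nonempty_iff_ne_empty, Ne, MvPolynomial.support_eq_empty]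
    obtain ⟨d, hd, h⟩ := Finset.exists_mem_eq_sup p.support hne (fun m => m.sum fun _ e => e)
    exact ⟨d, hd, h.symm⟩
  intro h
  have := coeff_homogeneousComponent (σ := σ) (R := R) p.totalDegree p d
  rw [h] at this
  simp only [coeff_zero] at this
  rw [if_pos] at this
  · exact (MvPolynomial.mem_support_iff.mp hd) this.symm
  · simpa [Finsupp.degree_apply, Finsupp.sum] using hdeg

lemma degree_add' (u v : σ →₀ ℕ) : (u + v).degree = u.degree + v.degree := by
  simp [Finsupp.degree_eq_weight_one, map_add]

lemma hc_mul_top [CommSemiring R] {p q : MvPolynomial σ R} {a b : ℕ}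
    (hp : p.totalDegree ≤ a) (hq : q.totalDegree ≤ b) :
    homogeneousComponent (a + b) (p * q) =
      homogeneousComponent a p * homogeneousComponent b q := by
  classical
  ext d
  rw [coeff_homogeneousComponent]
  by_cases hd : (Finsupp.degree d) = a + b
  · rw [if_pos hd, coeff_mul, coeff_mul]
    apply Finset.sum_congr rfl
    rintro ⟨u, v⟩ huv
    have huvsum : u + v = d := Finset.HasAntidiagonal.mem_antidiagonal.mp huv
    by_cases hu : Finsupp.degree u = a
    · have hv : Finsupp.degree v = b := by
        have : Finsupp.degree u + Finsupp.degree v = a + b := by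
          rw [← hd, ← huvsum, degree_add']
        omega
      rw [coeff_homogeneousComponent, coeff_homogeneousComponent, if_pos hu, if_pos hv]
    · -- one of the coeffs is zero on both sides
      have hdegsum : Finsupp.degree u + Finsupp.degree v = a + b := by
        rw [← hd, ← huvsum, degree_add']
      rcases lt_or_gt_of_ne hu with hlt | hgt
      · have hv : b < Finsupp.degree v := by omega
        have : coeff v q = 0 := by
          by_contra hc
          have := MvPolynomial.le_totalDegree (p := q) (s := v) (MvPolynomial.mem_support_iff.mpr hc)
          have : Finsupp.degree v ≤ b := le_trans (by simpa [Finsupp.degree_apply, Finsupp.sum] using this) hq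
          omega
        rw [this, coeff_homogeneousComponent (d := v), if_neg (by omega), mul_zero, mul_zero]
      · have : coeff u p = 0 := by
          by_contra hc
          have := MvPolynomial.le_totalDegree (p := p) (s := u) (MvPolynomial.mem_support_iff.mpr hc)
          have : Finsupp.degree u ≤ a := le_trans (by simpa [Finsupp.degree_apply, Finsupp.sum] using this) hp
          omega
        rw [this, coeff_homogeneousComponent (d := u), if_neg (by omega), zero_mul, zero_mul]
  · rw [if_neg hd]
    have hhom : (homogeneousComponent a p * homogeneousComponent b q).IsHomogeneous (a + b) :=
      (homogeneousComponent_isHomogeneous a p).mul (homogeneousComponent_isHomogeneous b q)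
    by_contra hc
    have h2 := hhom (d := d) (Ne.symm hc)
    change (Finsupp.weight fun _ => 1) d = a + b at h2
    rw [← Finsupp.degree_eq_weight_one] at h2
    exact hd h2

lemma totalDegree_mul_eq [CommRing R] [IsDomain R] {p q : MvPolynomial σ R}
    (hp : p ≠ 0) (hq : q ≠ 0) :
    (p * q).totalDegree = p.totalDegree + q.totalDegree := by
  refine le_antisymm (totalDegree_mul p q) ?_
  by_contra hlt
  push_neg at hlt
  have h0 := hc_mul_top (p := p) (q := q) (le_refl _) (le_refl _)
  rw [homogeneousComponent_eq_zero _ _ hlt] at h0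
  exact (mul_ne_zero (hc_totalDegree_ne_zero p hp) (hc_totalDegree_ne_zero q hq)) h0.symm


lemma totalDegree_pderiv_le {σ : Type*} {R : Type*} [CommRing R] (i : σ) (f : MvPolynomial σ R) :
    (pderiv i f).totalDegree ≤ f.totalDegree - 1 := by
  classical
  conv_lhs => rw [← support_sum_monomial_coeff f]
  rw [map_sum]
  refine le_trans (totalDegree_finset_sum _ _) ?_
  apply Finset.sup_le
  intro s hs
  rw [pderiv_monomial]
  by_cases h : s i = 0
  · simp [h]
  · refine le_trans (totalDegree_monomial_le _ _) ?_
    have hle : Finsupp.single i 1 ≤ s := by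
      rw [Finsupp.single_le_iff]; omega
    have hs' : (s - Finsupp.single i 1) + Finsupp.single i 1 = s := tsub_add_cancel_of_le hle
    have hdeg : (s - Finsupp.single i 1).degree + 1 = s.degree := by
      conv_rhs => rw [← hs']
      rw [degree_add']
      have : (Finsupp.single i 1).degree = 1 := by
        classical
        rw [Finsupp.degree_apply, Finsupp.support_single_ne_zero i one_ne_zero]
        simp
      rw [this]
    have hsd : s.degree ≤ f.totalDegree := by
      simpa [Finsupp.degree_apply, Finsupp.sum] using MvPolynomial.le_totalDegree hs
    have : ((s - Finsupp.single i 1).sum fun _ => id) = (s - Finsupp.single i 1).degree := rfl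
    omega

lemma pderiv_eq_zero_of_totalDegree_eq_zero {σ : Type*} {R : Type*} [CommRing R] (i : σ)
    {f : MvPolynomial σ R} (h : f.totalDegree = 0) : pderiv i f = 0 := by
  classical
  conv_lhs => rw [← support_sum_monomial_coeff f]
  rw [map_sum]
  apply Finset.sum_eq_zero
  intro s hs
  have hz : s i = 0 := (MvPolynomial.totalDegree_eq_zero_iff σ f).mp h s hs i
  rw [pderiv_monomial, hz]
  simp

lemma hasDerivAt_eval_update (h : MvPolynomial (Fin 2) ℝ) (p : Fin 2 → ℝ) (t : ℝ) :
    HasDerivAt (fun s => eval (Function.update p 1 s) h)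
      (eval (Function.update p 1 t) (pderiv 1 h)) t := by
  induction h using MvPolynomial.induction_on with
  | C a => simpa [pderiv_C] using hasDerivAt_const t ((C a : MvPolynomial (Fin 2) ℝ).eval (Function.update p 1 t))
  | add f g hf hg =>
    have := hf.add hg
    simp only [map_add]
    exact this
  | mul_X f i hf =>
    by_cases hi : i = 1
    · subst hi
      have hd : HasDerivAt (fun s => eval (Function.update p 1 s) f * s)
          ((eval (Function.update p 1 t) (pderiv 1 f)) * t + eval (Function.update p 1 t) f * 1) t := by
        exact hf.mul (hasDerivAt_id' t)
      have heq : (fun s => eval (Function.update p 1 s) f * s)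
          = fun s => eval (Function.update p 1 s) (f * X 1) := by
        funext s; simp
      rw [heq] at hd
      convert hd using 1
      simp only [pderiv_mul, pderiv_X_self, map_add, map_mul, mul_one, eval_X,
        Function.update_self]
    · have hd : HasDerivAt (fun s => eval (Function.update p 1 s) f * p i)
          (eval (Function.update p 1 t) (pderiv 1 f) * p i) t := hf.mul_const (p i)
      have : (fun s => eval (Function.update p 1 s) f * p i)
          = fun s => eval (Function.update p 1 s) (f * X i) := by
        funext s; simp [Function.update_of_ne hi]
      rw [this] at hd
      convert hd using 1
      simp only [pderiv_mul, pderiv_X_of_ne hi, map_add, map_mul, mul_zero, add_zero, eval_X,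
        Function.update_of_ne hi]

lemma eval_update_const (h : MvPolynomial (Fin 2) ℝ) (p : Fin 2 → ℝ)
    (hd : pderiv 1 h = 0) (t : ℝ) :
    eval (Function.update p 1 t) h = eval p h := by
  have hder : ∀ s : ℝ, HasDerivAt (fun s => eval (Function.update p 1 s) h) 0 s := by
    intro s
    simpa [hd] using hasDerivAt_eval_update h p s
  have := is_const_of_deriv_eq_zero (𝕜 := ℝ)
    (f := fun s => eval (Function.update p 1 s) h)
    (fun s => (hder s).differentiableAt) (fun s => (hder s).deriv) t (p 1)
  simpa [Function.update_eq_self] using this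

lemma sign_constant (h : MvPolynomial (Fin 2) ℝ)
    (hfin : {x : Fin 2 → ℝ | eval x h = 0}.Finite) :
    (∀ x, 0 ≤ eval x h) ∨ (∀ x, eval x h ≤ 0) := by
  by_contra hc
  push_neg at hc
  obtain ⟨⟨u, hu⟩, ⟨v, hv⟩⟩ := hc
  have hrank : 1 < Module.rank ℝ (Fin 2 → ℝ) := by
    rw [rank_fun']
    norm_num
  have hpc := (hfin.countable).isPathConnected_compl_of_one_lt_rank hrank
  have hconn := hpc.isConnected.isPreconnected
  have hu' : u ∈ {x : Fin 2 → ℝ | eval x h = 0}ᶜ := by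
    simp only [Set.mem_compl_iff, Set.mem_setOf_eq]; exact hu.ne
  have hv' : v ∈ {x : Fin 2 → ℝ | eval x h = 0}ᶜ := by
    simp only [Set.mem_compl_iff, Set.mem_setOf_eq]; exact hv.ne'
  obtain ⟨x, hxmem, hx⟩ := hconn.intermediate_value₂ hu' hv'
    ((MvPolynomial.continuous_eval h).continuousOn) continuousOn_const hu.le hv.le
  exact hxmem hx


abbrev V (t : ℕ) : Submodule ℝ (MvPolynomial (Fin 2) ℝ) := restrictTotalDegree (Fin 2) ℝ t

def T (t : ℕ) : Finset (ℕ × ℕ) :=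
  (Finset.range (t+1) ×ˢ Finset.range (t+1)).filter (fun x => x.1 + x.2 ≤ t)

lemma mem_T {t : ℕ} {x : ℕ × ℕ} : x ∈ T t ↔ x.1 + x.2 ≤ t := by
  simp only [T, Finset.mem_filter, Finset.mem_product, Finset.mem_range]
  omega

lemma T_card (t : ℕ) : 2 * (T t).card = (t+1) * (t+2) := by
  have hT : T t = (Finset.range (t+1)).biUnion (fun k => Finset.HasAntidiagonal.antidiagonal k) := by
    ext x
    simp only [mem_T, Finset.mem_biUnion, Finset.mem_range, Finset.HasAntidiagonal.mem_antidiagonal]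
    constructor
    · intro h; exact ⟨x.1 + x.2, by omega, rfl⟩
    · rintro ⟨k, hk, rfl⟩; omega
  rw [hT, Finset.card_biUnion]
  · have : ∑ k ∈ Finset.range (t+1), (Finset.HasAntidiagonal.antidiagonal k).card
        = ∑ k ∈ Finset.range (t+1), (k+1) := by
      simp [Finset.Nat.card_antidiagonal]
    rw [this]
    have h2 : ∑ k ∈ Finset.range (t+1), (k+1) = (∑ k ∈ Finset.range (t+2), k) := by
      rw [Finset.sum_range_succ' (fun k => k) (t+1)]
      simp
    rw [h2]
    have h3 : (∑ k ∈ Finset.range (t+2), k) * 2 = (t+2)*(t+1) := by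
      rw [Finset.sum_range_id_mul_two]
      rfl
    rw [mul_comm 2, h3, mul_comm]
  · intro a _ b _ hab
    simp only [Finset.disjoint_left, Finset.HasAntidiagonal.mem_antidiagonal]
    rintro x rfl h
    exact hab h

def E0 : (Fin 2 →₀ ℕ) ≃ (ℕ × ℕ) :=
  Finsupp.equivFunOnFinite.trans (piFinTwoEquiv fun _ => ℕ)

lemma hE0 (n : Fin 2 →₀ ℕ) : (n.sum fun _ e => e) = (E0 n).1 + (E0 n).2 := by
  rw [Finsupp.sum_fintype _ _ (fun _ => rfl)]
  simp [E0, Fin.sum_univ_two]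

lemma finrank_V (t : ℕ) : finrank ℝ (V t) = (T t).card := by
  classical
  set s : Set (Fin 2 →₀ ℕ) := { n | (n.sum fun _ e => e) ≤ t } with hs
  have E : s ≃ {x : ℕ × ℕ // x ∈ T t} := by
    refine (Equiv.subtypeEquiv E0 ?_)
    intro n
    rw [hs]
    simp only [Set.mem_setOf_eq, mem_T, hE0]
  letI : Fintype s := Fintype.ofEquiv _ E.symm
  change finrank ℝ (restrictSupport ℝ s) = _
  rw [finrank_eq_card_basis (basisRestrictSupport ℝ s)]
  rw [Fintype.card_congr E, Fintype.card_coe]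

lemma two_mul_finrank_V (t : ℕ) : 2 * finrank ℝ (V t) = (t+1) * (t+2) := by
  rw [finrank_V, T_card]

/-- interpolation linear polynomial -/
def L (p q : Fin 2 → ℝ) : MvPolynomial (Fin 2) ℝ :=
  C (p 0 - q 0) * (X 0 - C (q 0)) + C (p 1 - q 1) * (X 1 - C (q 1))

lemma eval_L (p q r : Fin 2 → ℝ) :
    eval r (L p q) = (p 0 - q 0) * (r 0 - q 0) + (p 1 - q 1) * (r 1 - q 1) := by
  simp [L]

lemma eval_L_self (p q : Fin 2 → ℝ) : eval q (L p q) = 0 := by simp [eval_L]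

lemma eval_L_pos (p q : Fin 2 → ℝ) (h : p ≠ q) : 0 < eval p (L p q) := by
  rw [eval_L]
  have hne : p 0 ≠ q 0 ∨ p 1 ≠ q 1 := by
    by_contra hc
    push_neg at hc
    exact h (funext fun i => by fin_cases i <;> [exact hc.1; exact hc.2])
  rcases hne with h0 | h1
  · nlinarith [mul_self_pos.mpr (sub_ne_zero.mpr h0), mul_self_nonneg (p 1 - q 1)]
  · nlinarith [mul_self_pos.mpr (sub_ne_zero.mpr h1), mul_self_nonneg (p 0 - q 0)]

lemma totalDegree_L_le (p q : Fin 2 → ℝ) : (L p q).totalDegree ≤ 1 := by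
  have hX : ∀ (i : Fin 2) (c : ℝ), (X i - C c : MvPolynomial (Fin 2) ℝ).totalDegree ≤ 1 := by
    intro i c
    rw [sub_eq_add_neg]
    refine le_trans (totalDegree_add _ _) (max_le ?_ ?_)
    · exact le_of_eq (totalDegree_X i)
    · rw [totalDegree_neg, totalDegree_C]; omega
  refine le_trans (totalDegree_add _ _) (max_le ?_ ?_) <;>
    refine le_trans (totalDegree_mul _ _) ?_ <;>
    simp only [totalDegree_C, zero_add] <;> apply hX

/-- evaluation map -/
def evMap (d : ℕ) (S : Set (Fin 2 → ℝ)) [Fintype S] : V d →ₗ[ℝ] (S → ℝ) where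
  toFun P s := eval (s : Fin 2 → ℝ) (P : MvPolynomial (Fin 2) ℝ)
  map_add' P Q := by funext s; simp
  map_smul' c P := by funext s; simp [smul_eval]

def phiMap (f g : MvPolynomial (Fin 2) ℝ) (a b d : ℕ)
    (hfd : a + f.totalDegree ≤ d) (hgd : b + g.totalDegree ≤ d) :
    (V a × V b) →ₗ[ℝ] V d :=
  LinearMap.codRestrict (V d)
    ((LinearMap.mulRight ℝ f).comp ((V a).subtype.comp (LinearMap.fst ℝ (V a) (V b)))
      + (LinearMap.mulRight ℝ g).comp ((V b).subtype.comp (LinearMap.snd ℝ (V a) (V b))))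
    (fun ab => by
      simp only [LinearMap.add_apply, LinearMap.comp_apply, LinearMap.mulRight_apply,
        Submodule.coe_subtype, LinearMap.fst_apply, LinearMap.snd_apply]
      rw [mem_restrictTotalDegree]
      refine le_trans (totalDegree_add _ _) (max_le ?_ ?_) <;>
        refine le_trans (totalDegree_mul _ _) ?_
      · have := (mem_restrictTotalDegree _ _ _).mp ab.1.2; omega
      · have := (mem_restrictTotalDegree _ _ _).mp ab.2.2; omega)

lemma coe_phiMap (f g : MvPolynomial (Fin 2) ℝ) (a b d : ℕ) (hfd hgd) (ab : V a × V b) :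
    (phiMap f g a b d hfd hgd ab : MvPolynomial (Fin 2) ℝ)
      = (ab.1 : MvPolynomial (Fin 2) ℝ) * f + (ab.2 : MvPolynomial (Fin 2) ℝ) * g := rfl

def psiMap (f g : MvPolynomial (Fin 2) ℝ) (c a b : ℕ)
    (h1 : c + g.totalDegree ≤ a) (h2 : c + f.totalDegree ≤ b) :
    V c →ₗ[ℝ] (V a × V b) :=
  (LinearMap.codRestrict (V a) ((LinearMap.mulLeft ℝ g).comp (V c).subtype)
    (fun x => by
      simp only [LinearMap.comp_apply, LinearMap.mulLeft_apply, Submodule.coe_subtype]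
      rw [mem_restrictTotalDegree]
      refine le_trans (totalDegree_mul _ _) ?_
      have := (mem_restrictTotalDegree _ _ _).mp x.2; omega)).prod
  (LinearMap.codRestrict (V b) (-((LinearMap.mulLeft ℝ f).comp (V c).subtype))
    (fun x => by
      simp only [LinearMap.neg_apply, LinearMap.comp_apply, LinearMap.mulLeft_apply,
        Submodule.coe_subtype]
      rw [mem_restrictTotalDegree, totalDegree_neg]
      refine le_trans (totalDegree_mul _ _) ?_
      have := (mem_restrictTotalDegree _ _ _).mp x.2; omega))

lemma coe_psiMap_fst (f g : MvPolynomial (Fin 2) ℝ) (c a b : ℕ) (h1 h2) (x : V c) :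
    ((psiMap f g c a b h1 h2 x).1 : MvPolynomial (Fin 2) ℝ)
      = g * (x : MvPolynomial (Fin 2) ℝ) := rfl

lemma coe_psiMap_snd (f g : MvPolynomial (Fin 2) ℝ) (c a b : ℕ) (h1 h2) (x : V c) :
    ((psiMap f g c a b h1 h2 x).2 : MvPolynomial (Fin 2) ℝ)
      = -(f * (x : MvPolynomial (Fin 2) ℝ)) := rfl

set_option maxHeartbeats 2000000 in
lemma coprime_case (f g : MvPolynomial (Fin 2) ℝ) (hf : f ≠ 0) (hg : g ≠ 0)
    (hrp : IsRelPrime f g) (S : Set (Fin 2 → ℝ)) (hS : S.Finite)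
    (hsub : ∀ x ∈ S, eval x f = 0 ∧ eval x g = 0) :
    S.ncard ≤ f.totalDegree * g.totalDegree := by
  classical
  letI : Fintype S := hS.fintype
  set m := f.totalDegree with hm
  set n := g.totalDegree with hn
  set N := S.ncard with hN
  have hNcard : N = Fintype.card S := by
    rw [hN, Set.ncard_eq_toFinset_card', Set.toFinset_card]
  set d := N + m + n with hd
  set ev := evMap d S with hev
  -- surjectivity of ev
  have hsurj : Function.Surjective ev := by
    intro w
    have key : ∀ p : S, ∃ P : V d,
        ∀ q : S, eval (q : Fin 2 → ℝ) (P : MvPolynomial (Fin 2) ℝ)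
          = if (q : S) = p then 1 else 0 := by
      intro p
      set Q : MvPolynomial (Fin 2) ℝ := ∏ q ∈ Finset.univ.erase p, L p.val q.val with hQ
      have hQdeg : Q.totalDegree ≤ d := by
        refine le_trans (totalDegree_finset_prod _ _) ?_
        refine le_trans (Finset.sum_le_sum fun q _ => totalDegree_L_le p.val q.val) ?_
        rw [Finset.sum_const, smul_eq_mul, mul_one]
        have h1 : (Finset.univ.erase p).card ≤ Fintype.card S := by
          refine le_trans (Finset.card_le_card (Finset.erase_subset _ _)) ?_
          simp [Finset.card_univ]
        omega
      have hQp : 0 < eval p.val Q := by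
        rw [hQ, map_prod]
        apply Finset.prod_pos
        intro q hq
        apply eval_L_pos
        intro hpq
        exact (Finset.mem_erase.mp hq).1 (Subtype.ext hpq.symm)
      have hQq : ∀ q : S, q ≠ p → eval q.val Q = 0 := by
        intro q hq
        rw [hQ, map_prod]
        refine Finset.prod_eq_zero (Finset.mem_erase.mpr ⟨hq, Finset.mem_univ q⟩) ?_
        exact eval_L_self _ _
      refine ⟨⟨(eval p.val Q)⁻¹ • Q, Submodule.smul_mem _ _
        ((mem_restrictTotalDegree _ _ _).mpr hQdeg)⟩, ?_⟩
      intro q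
      by_cases hqp : q = p
      · subst hqp
        simp [smul_eval, inv_mul_cancel₀ hQp.ne']
      · simp [smul_eval, hQq q hqp, hqp]
    choose Pb hPb using key
    refine ⟨∑ p : S, w p • Pb p, ?_⟩
    funext s
    have : ev (∑ p : S, w p • Pb p) s = ∑ p : S, w p * eval (s : Fin 2 → ℝ) ((Pb p : MvPolynomial (Fin 2) ℝ)) := by
      rw [map_sum]
      rw [Finset.sum_apply]
      congr 1
      funext p
      rw [map_smul]
      rfl
    rw [this]
    simp only [hPb]
    simp only [mul_ite, mul_one, mul_zero]
    rw [Finset.sum_ite_eq Finset.univ s w]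
    simp
  -- the multiplication map
  have hfd : (N + n) + m ≤ d := by omega
  have hgd : (N + m) + n ≤ d := by omega
  set φ := phiMap f g (N + n) (N + m) d hfd hgd with hφ
  set ψ := psiMap f g N (N + n) (N + m) (by omega) (by omega) with hψ
  have hψinj : Function.Injective ψ := by
    intro x y hxy
    apply Subtype.ext
    have h1 := congrArg (fun z => (z.1 : MvPolynomial (Fin 2) ℝ)) hxy
    rw [hψ] at h1
    simp only [coe_psiMap_fst] at h1
    exact mul_left_cancel₀ hg h1
  have hker_eq : LinearMap.ker φ = LinearMap.range ψ := by
    apply le_antisymm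
    · rintro ⟨a, b⟩ hab
      have hab' : (a : MvPolynomial (Fin 2) ℝ) * f + (b : MvPolynomial (Fin 2) ℝ) * g = 0 := by
        have h0 := congrArg (Subtype.val) (LinearMap.mem_ker.mp hab)
        rw [hφ] at h0
        rw [coe_phiMap] at h0
        simpa using h0
      by_cases ha : (a : MvPolynomial (Fin 2) ℝ) = 0
      · have hb : (b : MvPolynomial (Fin 2) ℝ) = 0 := by
          rw [ha, zero_mul, zero_add] at hab'
          rcases mul_eq_zero.mp hab' with h | h
          exacts [h, absurd h hg]
        refine ⟨0, ?_⟩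
        refine Prod.ext (Subtype.ext ?_) (Subtype.ext ?_)
        · rw [hψ, coe_psiMap_fst]
          simp [ha]
        · rw [hψ, coe_psiMap_snd]
          simp [hb]
      · have hdvd : g ∣ (a : MvPolynomial (Fin 2) ℝ) := by
          refine hrp.symm.dvd_of_dvd_mul_right (y := (a : MvPolynomial (Fin 2) ℝ)) ?_
          exact ⟨-(b : MvPolynomial (Fin 2) ℝ), by linear_combination hab'⟩
        obtain ⟨c, hc⟩ := hdvd
        have hc0 : c ≠ 0 := by
          rintro rfl
          rw [mul_zero] at hc
          exact ha hc
        have hcdeg : c.totalDegree ≤ N := by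
          have hA := (mem_restrictTotalDegree _ _ _).mp a.2
          rw [hc, totalDegree_mul_eq hg hc0] at hA
          omega
        have hb : (b : MvPolynomial (Fin 2) ℝ) = -(f * c) := by
          have hz : g * (c * f + (b : MvPolynomial (Fin 2) ℝ)) = 0 := by
            linear_combination hab' - f * hc
          rcases mul_eq_zero.mp hz with h | h
          · exact absurd h hg
          · linear_combination h
        refine ⟨⟨c, (mem_restrictTotalDegree _ _ _).mpr hcdeg⟩, ?_⟩
        refine Prod.ext (Subtype.ext ?_) (Subtype.ext ?_)
        · rw [hψ, coe_psiMap_fst]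
          exact hc.symm
        · rw [hψ, coe_psiMap_snd]
          exact hb.symm
    · rintro x ⟨c, rfl⟩
      rw [LinearMap.mem_ker]
      apply Subtype.ext
      rw [hφ, coe_phiMap, hψ, coe_psiMap_fst, coe_psiMap_snd]
      push_cast
      ring
  have hrange : LinearMap.range φ ≤ LinearMap.ker ev := by
    rintro x ⟨⟨a, b⟩, rfl⟩
    rw [LinearMap.mem_ker]
    funext s
    have hsS := hsub s.val s.2
    have : (ev (φ (a, b))) s = eval (s : Fin 2 → ℝ) ((a : MvPolynomial (Fin 2) ℝ) * f + (b : MvPolynomial (Fin 2) ℝ) * g) := by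
      rw [hev, hφ]
      show eval (s : Fin 2 → ℝ) ((phiMap f g (N+n) (N+m) d hfd hgd (a, b) : MvPolynomial (Fin 2) ℝ)) = _
      rw [coe_phiMap]
    rw [this, map_add, map_mul, map_mul, hsS.1, hsS.2, mul_zero, mul_zero, add_zero]
    rfl
  -- rank accounting
  have e1 : finrank ℝ (LinearMap.range ev) + finrank ℝ (LinearMap.ker ev) = finrank ℝ (V d) :=
    LinearMap.finrank_range_add_finrank_ker ev
  have hfr_ev : finrank ℝ (LinearMap.range ev) = N := by
    rw [LinearMap.range_eq_top.mpr hsurj, finrank_top, finrank_pi]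
    exact hNcard.symm
  haveI : Module.Free ℝ ↥(V (N + n)) := Module.Free.of_divisionRing ℝ _
  haveI : Module.Free ℝ ↥(V (N + m)) := Module.Free.of_divisionRing ℝ _
  have e2 : finrank ℝ (LinearMap.range φ) + finrank ℝ (LinearMap.ker φ)
      = finrank ℝ (V (N + n)) + finrank ℝ (V (N + m)) := by
    rw [LinearMap.finrank_range_add_finrank_ker φ, finrank_prod]
  have hkerφ : finrank ℝ (LinearMap.ker φ) = finrank ℝ (V N) := by
    rw [hker_eq, LinearMap.finrank_range_of_inj hψinj]
  have e3 : finrank ℝ (LinearMap.range φ) ≤ finrank ℝ (LinearMap.ker ev) :=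
    Submodule.finrank_mono hrange
  have c1 : 2 * finrank ℝ (V d) = (d+1) * (d+2) := two_mul_finrank_V d
  have c2 : 2 * finrank ℝ (V (N+n)) = (N+n+1) * (N+n+2) := two_mul_finrank_V (N+n)
  have c3 : 2 * finrank ℝ (V (N+m)) = (N+m+1) * (N+m+2) := two_mul_finrank_V (N+m)
  have c4 : 2 * finrank ℝ (V N) = (N+1) * (N+2) := two_mul_finrank_V N
  have key : finrank ℝ (V (N+n)) + finrank ℝ (V (N+m)) + N
      ≤ finrank ℝ (V d) + finrank ℝ (V N) := by omega
  have c1' : 2 * finrank ℝ (V d) = (N+m+n+1) * (N+m+n+2) := by rw [c1, hd]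
  have key2 : 2 * finrank ℝ (V (N+n)) + 2 * finrank ℝ (V (N+m)) + 2 * N
      ≤ 2 * finrank ℝ (V d) + 2 * finrank ℝ (V N) := by omega
  rw [c1', c2, c3, c4] at key2
  nlinarith [key2]

-- new material
lemma eq_C_of_totalDegree_eq_zero {f : MvPolynomial (Fin 2) ℝ} (h : f.totalDegree = 0) :
    f = C (coeff 0 f) := by
  classical
  ext d
  rw [coeff_C]
  by_cases hd : d = 0
  · subst hd; simp
  · rw [if_neg (Ne.symm hd)]
    by_contra hc
    have hds : d ∈ f.support := MvPolynomial.mem_support_iff.mpr hc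
    have := (totalDegree_eq_zero_iff (Fin 2) f).mp h d hds
    exact hd (Finsupp.ext this)

lemma isUnit_of_totalDegree_eq_zero {f : MvPolynomial (Fin 2) ℝ} (hf : f ≠ 0)
    (h : f.totalDegree = 0) : IsUnit f := by
  have hC := eq_C_of_totalDegree_eq_zero h
  have hc : coeff 0 f ≠ 0 := by
    intro h0
    rw [h0, map_zero] at hC
    exact hf hC
  rw [hC]
  exact isUnit_iff_exists_inv.mpr ⟨C (coeff 0 f)⁻¹, by
    rw [← C_mul, mul_inv_cancel₀ hc, C_1]⟩

lemma irreducible_totalDegree_pos {q : MvPolynomial (Fin 2) ℝ} (hq : Irreducible q) :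
    1 ≤ q.totalDegree := by
  by_contra hk
  push_neg at hk
  exact hq.not_isUnit (isUnit_of_totalDegree_eq_zero hq.ne_zero (by omega))

lemma pderiv_zero_at_zeros (q : MvPolynomial (Fin 2) ℝ)
    (hsign : (∀ x, 0 ≤ eval x q) ∨ (∀ x, eval x q ≤ 0))
    (p : Fin 2 → ℝ) (hp : eval p q = 0) : eval p (pderiv 1 q) = 0 := by
  have hder := hasDerivAt_eval_update q p (p 1)
  rw [Function.update_eq_self] at hder
  rcases hsign with hpos | hneg
  · have hloc : IsLocalMin (fun s => eval (Function.update p 1 s) q) (p 1) := by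
      apply Filter.Eventually.of_forall
      intro s
      simp only [Function.update_eq_self, hp]
      exact hpos _
    have := hloc.deriv_eq_zero
    rwa [hder.deriv] at this
  · have hloc : IsLocalMax (fun s => eval (Function.update p 1 s) q) (p 1) := by
      apply Filter.Eventually.of_forall
      intro s
      simp only [Function.update_eq_self, hp]
      exact hneg _
    have := hloc.deriv_eq_zero
    rwa [hder.deriv] at this

lemma main_induction (D : ℕ) : ∀ (f g : MvPolynomial (Fin 2) ℝ), f ≠ 0 → g ≠ 0 →
    f.totalDegree + g.totalDegree ≤ D →
    ({x | eval x f = 0} ∩ {x | eval x g = 0} : Set (Fin 2 → ℝ)).Finite →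
    ({x | eval x f = 0} ∩ {x | eval x g = 0} : Set (Fin 2 → ℝ)).ncard
      ≤ f.totalDegree * g.totalDegree := by
  induction D with
  | zero =>
    intro f g hf hg hD hfin
    -- both have degree zero, hence are coprime (all common divisors are units)
    refine coprime_case f g hf hg ?_ _ hfin (fun x hx => ⟨hx.1, hx.2⟩)
    intro e hef heg
    obtain ⟨f₁, rfl⟩ := hef
    have he : e ≠ 0 := fun h0 => hf (by rw [h0, zero_mul])
    have hf₁ : f₁ ≠ 0 := fun h0 => hf (by rw [h0, mul_zero])
    have := totalDegree_mul_eq he hf₁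
    exact isUnit_of_totalDegree_eq_zero he (by omega)
  | succ D IH =>
    intro f g hf hg hD hfin
    by_cases hcop : IsRelPrime f g
    · exact coprime_case f g hf hg hcop _ hfin (fun x hx => ⟨hx.1, hx.2⟩)
    · simp only [IsRelPrime, not_forall] at hcop
      obtain ⟨d0, hd0f, hd0g, hd0u⟩ := hcop
      have hd0ne : d0 ≠ 0 := by
        rintro rfl
        exact hf (zero_dvd_iff.mp hd0f)
      obtain ⟨q, hqirr, hqd⟩ := WfDvdMonoid.exists_irreducible_factor hd0u hd0ne
      obtain ⟨f₁, hf₁eq⟩ := hqd.trans hd0f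
      obtain ⟨g₁, hg₁eq⟩ := hqd.trans hd0g
      have hq0 : q ≠ 0 := hqirr.ne_zero
      have hf₁ : f₁ ≠ 0 := fun h0 => hf (by rw [hf₁eq, h0, mul_zero])
      have hg₁ : g₁ ≠ 0 := fun h0 => hg (by rw [hg₁eq, h0, mul_zero])
      set k := q.totalDegree with hk
      set a := f₁.totalDegree with ha
      set b := g₁.totalDegree with hb
      have hk1 : 1 ≤ k := irreducible_totalDegree_pos hqirr
      have hm : f.totalDegree = k + a := by rw [hf₁eq, totalDegree_mul_eq hq0 hf₁]
      have hn : g.totalDegree = k + b := by rw [hg₁eq, totalDegree_mul_eq hq0 hg₁]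
      set S := ({x | eval x f = 0} ∩ {x | eval x g = 0} : Set (Fin 2 → ℝ)) with hS
      set A := ({x | eval x q = 0} : Set (Fin 2 → ℝ)) with hA
      set B := ({x | eval x f₁ = 0} ∩ {x | eval x g₁ = 0} : Set (Fin 2 → ℝ)) with hB
      have hA_sub : A ⊆ S := by
        intro x hx
        have hx' : eval x q = 0 := hx
        constructor
        · show eval x f = 0
          rw [hf₁eq, map_mul, hx', zero_mul]
        · show eval x g = 0
          rw [hg₁eq, map_mul, hx', zero_mul]
      have hB_sub : B ⊆ S := by
        rintro x ⟨hx1, hx2⟩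
        constructor
        · show eval x f = 0
          rw [hf₁eq, map_mul, Set.mem_setOf_eq.mp hx1, mul_zero]
        · show eval x g = 0
          rw [hg₁eq, map_mul, Set.mem_setOf_eq.mp hx2, mul_zero]
      have hAfin : A.Finite := hfin.subset hA_sub
      have hBfin : B.Finite := hfin.subset hB_sub
      have hSsub : S ⊆ A ∪ B := by
        rintro x ⟨hxf, hxg⟩
        have hxf' : eval x q * eval x f₁ = 0 := by
          rw [← map_mul, ← hf₁eq]; exact hxf
        have hxg' : eval x q * eval x g₁ = 0 := by
          rw [← map_mul, ← hg₁eq]; exact hxg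
        rcases mul_eq_zero.mp hxf' with h | h
        · exact Or.inl h
        · rcases mul_eq_zero.mp hxg' with h2 | h2
          · exact Or.inl h2
          · exact Or.inr ⟨h, h2⟩
      -- bound on B
      have hBbound : B.ncard ≤ a * b := by
        have : a + b ≤ D := by omega
        exact IH f₁ g₁ hf₁ hg₁ this hBfin
      -- bound on A
      have hAbound : A.ncard ≤ k * (k - 1) := by
        have hsign := sign_constant q hAfin
        by_cases hq' : pderiv 1 q = 0
        · -- A must be empty
          rcases Set.eq_empty_or_nonempty A with hAe | ⟨p, hp⟩
          · rw [hAe]; simp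
          · exfalso
            have hinf : A.Infinite := by
              apply Set.infinite_of_injective_forall_mem
                (f := fun t : ℝ => Function.update p 1 t)
              · intro s t hst
                have := congrFun hst 1
                simpa using this
              · intro t
                show eval (Function.update p 1 t) q = 0
                rw [eval_update_const q p hq' t]
                exact hp
            exact hinf hAfin
        · have hderzero : ∀ p ∈ A, eval p (pderiv 1 q) = 0 :=
            fun p hp => pderiv_zero_at_zeros q hsign p hp
          have hA_sub2 : A ⊆ ({x | eval x q = 0} ∩ {x | eval x (pderiv 1 q) = 0} : Set (Fin 2 → ℝ)) := by
            intro p hp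
            exact ⟨hp, hderzero p hp⟩
          have hsmall : ({x | eval x q = 0} ∩ {x | eval x (pderiv 1 q) = 0} : Set (Fin 2 → ℝ)).Finite :=
            hAfin.subset (Set.inter_subset_left)
          have hdeg : q.totalDegree + (pderiv 1 q).totalDegree ≤ D := by
            have h1 := totalDegree_pderiv_le 1 q
            have h2 : k ≤ f.totalDegree := by omega
            have h3 : k ≤ g.totalDegree := by omega
            omega
          have := IH q (pderiv 1 q) hq0 hq' hdeg hsmall
          refine le_trans (Set.ncard_le_ncard hA_sub2 hsmall) (le_trans this ?_)
          have h1 := totalDegree_pderiv_le 1 q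
          exact Nat.mul_le_mul_left k (by omega)
      calc S.ncard ≤ (A ∪ B).ncard := Set.ncard_le_ncard hSsub (hAfin.union hBfin)
        _ ≤ A.ncard + B.ncard := Set.ncard_union_le A B
        _ ≤ k * (k - 1) + a * b := by omega
        _ ≤ (k + a) * (k + b) := by
              have h5 : k * (k - 1) ≤ k * k := Nat.mul_le_mul_left k (by omega)
              nlinarith [h5]
        _ = f.totalDegree * g.totalDegree := by rw [hm, hn]

end
end BezoutAux

/-- Bézout-type bound: if two real algebraic plane curves `Γ = Z(f)` and `Z = Z(g)`
(zero sets of nonzero polynomials `f, g : ℝ[x,y]`) have finite intersection, then the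
number of intersection points is at most `deg f * deg g`. -/
theorem bezout_plane_curves
    (f g : MvPolynomial (Fin 2) ℝ) (hf : f ≠ 0) (hg : g ≠ 0)
    (Γ Z : Set (Fin 2 → ℝ))
    (hΓ : Γ = {x | MvPolynomial.eval x f = 0})
    (hZ : Z = {x | MvPolynomial.eval x g = 0})
    (hfin : (Γ ∩ Z).Finite) :
    (Γ ∩ Z).ncard ≤ f.totalDegree * g.totalDegree := by
  subst hΓ hZ
  exact BezoutAux.main_induction (f.totalDegree + g.totalDegree) f g hf hg le_rfl hfin
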